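/- Let Ω be the open unit disk in ℝ² ≅ ℂ and let c ∈ L²(Ω). Define J^{cc}_{i,j} = ∫_Ω c Re(z^i) Re(z^j) dz, J^{ss}_{i,j} = ∫_Ω c Im(z^i) Im(z^j) dz, J^{sc}_{i,j} = ∫_Ω c Im(z^i) Re(z^j) dz and J^{cs}_{i,j} = ∫_Ω c Re(z^i) Im(z^j) dz. Then the matrices (J^{ss} − J^{cc})_{i,j≥0} and (J^{sc} + J^{cs})_{i,j≥0} are Hankel matrices: whenever i + j = i' + j', one has J^{ss}_{i,j} − J^{cc}_{i,j} = J^{ss}_{i',j'} − J^{cc}_{i',j'} and J^{sc}_{i,j} + J^{cs}_{i,j} = J^{sc}_{i',j'} + J^{cs}_{i',j'}. -/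

import Mathlib

open MeasureTheory Real Filter

lemma disk_mul_integrable (c : ℂ → ℝ)
    (hc : MemLp c 2 (volume.restrict (Metric.ball (0:ℂ) 1)))
    (f : ℂ → ℝ) (hf : Continuous f) :
    Integrable (fun z => c z * f z) (volume.restrict (Metric.ball (0:ℂ) 1)) := by
  haveI : IsFiniteMeasure (volume.restrict (Metric.ball (0:ℂ) 1)) :=
    ⟨by rw [Measure.restrict_apply_univ]; exact measure_ball_lt_top⟩
  have hci : Integrable c (volume.restrict (Metric.ball (0:ℂ) 1)) :=
    hc.integrable (by norm_num)
  have h := hci.bdd_mul (f := f) (c := sSup (norm ∘ f '' Metric.closedBall 0 1))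
    hf.aestronglyMeasurable.restrict ?_
  · simpa [mul_comm] using h
  · rw [ae_restrict_iff' measurableSet_ball]
    filter_upwards with z hz
    exact le_csSup ((isCompact_closedBall 0 1).image (continuous_norm.comp hf)).bddAbove
      ⟨z, Metric.ball_subset_closedBall hz, rfl⟩

theorem linearized_Schrodinger_Hankel (c : ℂ → ℝ)
    (hc : MemLp c 2 (volume.restrict (Metric.ball (0:ℂ) 1)))
    (Jcc Jss Jsc Jcs : ℕ → ℕ → ℝ)
    (hJcc : ∀ i j, Jcc i j = ∫ z in Metric.ball (0:ℂ) 1, c z * (z ^ i).re * (z ^ j).re)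
    (hJss : ∀ i j, Jss i j = ∫ z in Metric.ball (0:ℂ) 1, c z * (z ^ i).im * (z ^ j).im)
    (hJsc : ∀ i j, Jsc i j = ∫ z in Metric.ball (0:ℂ) 1, c z * (z ^ i).im * (z ^ j).re)
    (hJcs : ∀ i j, Jcs i j = ∫ z in Metric.ball (0:ℂ) 1, c z * (z ^ i).re * (z ^ j).im)
    (i j i' j' : ℕ) (hsum : i + j = i' + j') :
    Jss i j - Jcc i j = Jss i' j' - Jcc i' j'
    ∧ Jsc i j + Jcs i j = Jsc i' j' + Jcs i' j' := by
  have key1 : ∀ a b : ℕ, Jss a b - Jcc a b =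
      -∫ z in Metric.ball (0:ℂ) 1, (z ^ (a+b)).re * c z := by
    intro a b
    have h1 : Integrable (fun z => c z * (z ^ a).im * (z ^ b).im)
        (volume.restrict (Metric.ball (0:ℂ) 1)) := by
      have := disk_mul_integrable c hc (fun z => (z ^ a).im * (z ^ b).im) (by continuity)
      simpa [mul_assoc] using this
    have h2 : Integrable (fun z => c z * (z ^ a).re * (z ^ b).re)
        (volume.restrict (Metric.ball (0:ℂ) 1)) := by
      have := disk_mul_integrable c hc (fun z => (z ^ a).re * (z ^ b).re) (by continuity)
      simpa [mul_assoc] using this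
    have e : (∫ z in Metric.ball (0:ℂ) 1, c z * (z ^ a).im * (z ^ b).im)
        - (∫ z in Metric.ball (0:ℂ) 1, c z * (z ^ a).re * (z ^ b).re)
        = ∫ z in Metric.ball (0:ℂ) 1, -((z ^ (a+b)).re * c z) := by
      rw [← integral_sub h1 h2]
      congr 1
      ext z
      rw [pow_add]
      simp [Complex.mul_re]
      ring
    rw [hJss, hJcc, e, integral_neg]
  have key2 : ∀ a b : ℕ, Jsc a b + Jcs a b =
      ∫ z in Metric.ball (0:ℂ) 1, (z ^ (a+b)).im * c z := by
    intro a b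
    have h1 : Integrable (fun z => c z * (z ^ a).im * (z ^ b).re)
        (volume.restrict (Metric.ball (0:ℂ) 1)) := by
      have := disk_mul_integrable c hc (fun z => (z ^ a).im * (z ^ b).re) (by continuity)
      simpa [mul_assoc] using this
    have h2 : Integrable (fun z => c z * (z ^ a).re * (z ^ b).im)
        (volume.restrict (Metric.ball (0:ℂ) 1)) := by
      have := disk_mul_integrable c hc (fun z => (z ^ a).re * (z ^ b).im) (by continuity)
      simpa [mul_assoc] using this
    have e : (∫ z in Metric.ball (0:ℂ) 1, c z * (z ^ a).im * (z ^ b).re)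
        + (∫ z in Metric.ball (0:ℂ) 1, c z * (z ^ a).re * (z ^ b).im)
        = ∫ z in Metric.ball (0:ℂ) 1, (z ^ (a+b)).im * c z := by
      rw [← integral_add h1 h2]
      congr 1
      ext z
      rw [pow_add]
      simp [Complex.mul_im]
      ring
    rw [hJsc, hJcs, e]
  rw [key1, key1, key2, key2, hsum]
  exact ⟨rfl, rfl⟩
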